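/- Let G be a finitely generated group with word metric, ω a non-principal ultrafilter on ℕ, (d_j) scaling constants with lim_ω d_j = ∞, ε > 0, and suppose the ball B_C(ε, 1̄) in the asymptotic cone C = Con^ω(G,(d_j)) is covered by balls B_C(ε/4, x_i), i = 1,...,k, with x_i = (g_{i,j})^ω. Let p_j be natural numbers with lim_ω (2p_j)/d_j = ε and 2p_j > ε d_j. Then ω-almost surely in j, the ball B_G(2p_j, 1) in G is covered by the union of the balls g_{i,j} B_G(p_j, 1), i = 1,...,k. -/

import Mathlib

open scoped ENNReal

/-- Word-metric distance on a group `G` with respect to a generating set `S`: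
`dist g h` is the length of a shortest word over `S ∪ S⁻¹` representing `g⁻¹h`. -/
noncomputable def wordDist {G : Type*} [Group G] (S : Set G) (g h : G) : ℕ :=
  sInf {n | ∃ w : List G, (∀ x ∈ w, x ∈ S ∪ S⁻¹) ∧ w.prod = g⁻¹ * h ∧ w.length = n}

/-- The ultralimit of a sequence in `[0,∞]` along an ultrafilter `ω`:
the (unique) limit of the sequence along `ω` in the compact space `ℝ≥0∞`. -/
noncomputable def ulim (ω : Ultrafilter ℕ) (r : ℕ → ℝ≥0∞) : ℝ≥0∞ :=
  Filter.limUnder (ω : Filter ℕ) r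

/-- The rescaled ultralimit pseudodistance `d̄(u,v) = lim_ω dist(u_i,v_i)/d_i`
on sequences in `G`. -/
noncomputable def conPdist {G : Type*} [Group G] (ω : Ultrafilter ℕ) (d : ℕ → ℝ)
    (S : Set G) (u v : ℕ → G) : ℝ≥0∞ :=
  ulim ω fun i => (wordDist S (u i) (v i) : ℝ≥0∞) / ENNReal.ofReal (d i)

/-- The sequences at finite rescaled distance from the constant sequence `1`. -/
def GbSet {G : Type*} [Group G] (ω : Ultrafilter ℕ) (d : ℕ → ℝ) (S : Set G) :
    Set (ℕ → G) := {u | conPdist ω d S (fun _ => 1) u ≠ ∞}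

/-- The asymptotic cone `Con^ω(G,(d_i))`: the quotient of `GbSet` by the
relation `d̄(u,v) = 0`. -/
def Cone {G : Type*} [Group G] (ω : Ultrafilter ℕ) (d : ℕ → ℝ) (S : Set G) :=
  Quot (fun u v : GbSet ω d S => conPdist ω d S u.1 v.1 = 0)

/-- The metric on the asymptotic cone induced by `conPdist`. -/
noncomputable def coneDist {G : Type*} [Group G] (ω : Ultrafilter ℕ) (d : ℕ → ℝ)
    (S : Set G) (x y : Cone ω d S) : ℝ≥0∞ :=
  conPdist ω d S (Quot.out x).1 (Quot.out y).1

open scoped Pointwise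

open Filter in
lemma ulim_tendsto (ω : Ultrafilter ℕ) (r : ℕ → ℝ≥0∞) :
    Filter.Tendsto r (ω : Filter ℕ) (nhds (ulim ω r)) := by
  have h : Filter.Tendsto r (ω : Filter ℕ) (nhds (Ultrafilter.map r ω).lim) :=
    (Ultrafilter.map r ω).le_nhds_lim
  rwa [ulim, h.limUnder_eq]

lemma ulim_mono (ω : Ultrafilter ℕ) {r s : ℕ → ℝ≥0∞}
    (h : ∀ᶠ j in (ω : Filter ℕ), r j ≤ s j) : ulim ω r ≤ ulim ω s :=
  le_of_tendsto_of_tendsto (ulim_tendsto ω r) (ulim_tendsto ω s) h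


/-- Suppose the closed ball `B_C(ε, 1̄)` of the asymptotic cone
`C = Con^ω(G,(d_j))` is covered by the balls `B_C(ε/4, x_i)`, `i = 1,…,k`,
with `x_i = (g_{i,j})^ω`, and let `p_j ∈ ℕ` satisfy `2p_j > ε d_j` and
`lim_ω 2p_j/d_j = ε`.  Then ω-almost surely in `j`, the ball `B_G(2p_j,1)`
of `G` is covered by the translates `g_{i,j} B_G(p_j,1)`, `i = 1,…,k`. -/
theorem stmt11 {G : Type*} [Group G] (S : Finset G)
    (hgen : Subgroup.closure (S : Set G) = ⊤) (hsym : ∀ x ∈ S, x⁻¹ ∈ S)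
    (ω : Ultrafilter ℕ) (hω : ∀ A : Set ℕ, A.Finite → A ∉ ω)
    (d : ℕ → ℝ) (hd : ∀ n, 0 < d n)
    (hdlim : Filter.Tendsto d (ω : Filter ℕ) Filter.atTop)
    (ε : ℝ) (hε : 0 < ε) (k : ℕ) (g : Fin k → ℕ → G)
    (hg : ∀ i, g i ∈ GbSet ω d (S : Set G))
    (hcov : ∀ u : ℕ → G, u ∈ GbSet ω d (S : Set G) →
        conPdist ω d (S : Set G) (fun _ => 1) u ≤ ENNReal.ofReal ε →
        ∃ i, conPdist ω d (S : Set G) (g i) u ≤ ENNReal.ofReal (ε / 4))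
    (p : ℕ → ℕ) (hp : ∀ j, ε * d j < 2 * p j)
    (hplim : ulim ω (fun j => ((2 * p j : ℕ) : ℝ≥0∞) / ENNReal.ofReal (d j)) =
        ENNReal.ofReal ε) :
    {j | ∀ z : G, wordDist (S : Set G) 1 z ≤ 2 * p j →
        ∃ i, wordDist (S : Set G) (g i j) z ≤ p j} ∈ ω := by
  by_contra hnot
  have hA : {j | ∃ z : G, wordDist (S : Set G) 1 z ≤ 2 * p j ∧
      ∀ i, ¬ wordDist (S : Set G) (g i j) z ≤ p j} ∈ ω := by
    have := (Ultrafilter.compl_mem_iff_notMem (s := {j | ∀ z : G,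
        wordDist (S : Set G) 1 z ≤ 2 * p j →
        ∃ i, wordDist (S : Set G) (g i j) z ≤ p j}) (f := ω)).2 hnot
    refine ω.mem_of_superset this ?_
    intro j hj
    simp only [Set.mem_compl_iff, Set.mem_setOf_eq] at hj ⊢
    push_neg at hj
    obtain ⟨z, hz1, hz2⟩ := hj
    exact ⟨z, hz1, fun i => by simpa using hz2 i⟩
  classical
  set u : ℕ → G := fun j =>
    if h : ∃ z : G, wordDist (S : Set G) 1 z ≤ 2 * p j ∧
        ∀ i, ¬ wordDist (S : Set G) (g i j) z ≤ p j then h.choose else 1 with hu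
  have hu1 : ∀ᶠ j in (ω : Filter ℕ), wordDist (S : Set G) 1 (u j) ≤ 2 * p j ∧
      ∀ i, ¬ wordDist (S : Set G) (g i j) (u j) ≤ p j := by
    filter_upwards [hA] with j hj
    simp only [hu, dif_pos hj]
    exact hj.choose_spec
  -- conPdist 1 u ≤ ofReal ε
  have hle : conPdist ω d (S : Set G) (fun _ => 1) (u) ≤ ENNReal.ofReal ε := by
    rw [conPdist, ← hplim]
    refine ulim_mono ω ?_
    filter_upwards [hu1] with j hj
    exact ENNReal.div_le_div_right (by exact_mod_cast hj.1) _
  have hmem : u ∈ GbSet ω d (S : Set G) := by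
    simp only [GbSet, Set.mem_setOf_eq]
    exact (lt_of_le_of_lt hle ENNReal.ofReal_lt_top).ne
  obtain ⟨i, hi⟩ := hcov u hmem hle
  -- the half-limit
  set L : ℝ≥0∞ := ulim ω (fun j => ((p j : ℕ) : ℝ≥0∞) / ENNReal.ofReal (d j)) with hL
  have h2L : 2 * L = ENNReal.ofReal ε := by
    have ht : Filter.Tendsto (fun j => ((p j : ℕ) : ℝ≥0∞) / ENNReal.ofReal (d j))
        (ω : Filter ℕ) (nhds L) := ulim_tendsto ω _
    have ht2 : Filter.Tendsto (fun j => ((2 * p j : ℕ) : ℝ≥0∞) / ENNReal.ofReal (d j))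
        (ω : Filter ℕ) (nhds (2 * L)) := by
      have := ENNReal.Tendsto.const_mul (a := 2) ht (Or.inr (by norm_num))
      refine this.congr fun j => ?_
      push_cast
      rw [← mul_div_assoc]
    rw [← hplim, ulim, ht2.limUnder_eq]
  -- L ≤ conPdist (g i) u
  have hLle : L ≤ conPdist ω d (S : Set G) (g i) u := by
    rw [conPdist]
    refine ulim_mono ω ?_
    filter_upwards [hu1] with j hj
    have := (hj.2 i)
    push_neg at this
    exact ENNReal.div_le_div_right (by exact_mod_cast this.le) _
  have hcontr : ENNReal.ofReal ε ≤ ENNReal.ofReal (ε / 2) := by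
    calc ENNReal.ofReal ε = 2 * L := h2L.symm
    _ ≤ 2 * ENNReal.ofReal (ε / 4) := by
        exact mul_le_mul_right (hLle.trans hi) 2
    _ = ENNReal.ofReal (ε / 2) := by
        rw [← ENNReal.ofReal_ofNat, ← ENNReal.ofReal_mul (by norm_num)]
        ring_nf
  have : ε ≤ ε / 2 := by
    have := (ENNReal.ofReal_le_ofReal_iff (by positivity)).1 hcontr
    linarith
  linarith
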